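/- The SoftNCE loss bounds mutual information as I(X;C) ≥ log N − I_NCE^{soft}. (Second item of Proposition 2.) -/

import Mathlib

open MeasureTheory ProbabilityTheory Filter
open scoped Classical ENNReal Topology

/-- The Kullback–Leibler divergence `KL(P‖Q) = ∫ log (dP/dQ) dP`, with value `+∞`
when `P` is not absolutely continuous with respect to `Q` (or the integral is undefined). -/
noncomputable def klDivergence {Ω : Type*} [MeasurableSpace Ω] (P Q : Measure Ω) : EReal :=
  if P ≪ Q ∧ Integrable (fun ω => Real.log ((P.rnDeriv Q ω).toReal)) P
  then ((∫ ω, Real.log ((P.rnDeriv Q ω).toReal) ∂P : ℝ) : EReal)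
  else ⊤

/-- The mutual information `I(X;C) := KL(law(X,C) ‖ law(X) ⊗ law(C))`. -/
noncomputable def mutualInfo {Ω 𝓧 𝒞 : Type*} [MeasurableSpace Ω] [MeasurableSpace 𝓧]
    [MeasurableSpace 𝒞] (μ : Measure Ω) (X : Ω → 𝓧) (C : Ω → 𝒞) : EReal :=
  klDivergence (μ.map (fun ω => (X ω, C ω))) ((μ.map X).prod (μ.map C))

/-- The conditional law of `X` given `C = c`. -/
noncomputable def condLaw {Ω 𝓧 𝒞 : Type*} [MeasurableSpace Ω] [MeasurableSpace 𝓧]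
    [MeasurableSpace 𝒞] (μ : Measure Ω) (X : Ω → 𝓧) (C : Ω → 𝒞) (c : 𝒞) : Measure 𝓧 :=
  (μ[|C ⁻¹' {c}]).map X

/-- The law `P_i` of `(X, (C_1, …, C_N))` under which `C_1, …, C_N` are i.i.d. copies of `C`
and `X` is drawn from the conditional law of `X` given `C = C_i`, conditionally
independently of the other `C_j`. -/
noncomputable def Pmeas {Ω 𝓧 𝒞 : Type*} [MeasurableSpace Ω] [MeasurableSpace 𝓧]
    [MeasurableSpace 𝒞] (μ : Measure Ω) (X : Ω → 𝓧) (C : Ω → 𝒞) (N : ℕ) (i : Fin N) :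
    Measure (𝓧 × (Fin N → 𝒞)) :=
  (Measure.pi fun _ : Fin N => μ.map C).bind
    (fun cs => (condLaw μ X C (cs i)).map (fun x => (x, cs)))

/-- The law `Q` of `(X, (C_1, …, C_N))` under which `X` has the marginal law of `X` and is
independent of `C_1, …, C_N`, which are i.i.d. copies of `C`. -/
noncomputable def Qmeas {Ω 𝓧 𝒞 : Type*} [MeasurableSpace Ω] [MeasurableSpace 𝓧]
    [MeasurableSpace 𝒞] (μ : Measure Ω) (X : Ω → 𝓧) (C : Ω → 𝒞) (N : ℕ) :
    Measure (𝓧 × (Fin N → 𝒞)) :=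
  (μ.map X).prod (Measure.pi fun _ : Fin N => μ.map C)

theorem test : True := trivial

lemma measure_ext_prod_singleton {𝓧 F : Type*} [MeasurableSpace 𝓧] [MeasurableSpace F]
    [Countable F] [MeasurableSingletonClass F]
    {ν₁ ν₂ : Measure (𝓧 × F)}
    (h : ∀ (A : Set 𝓧), MeasurableSet A → ∀ c : F, ν₁ (A ×ˢ ({c} : Set F)) = ν₂ (A ×ˢ {c})) :
    ν₁ = ν₂ := by
  ext S hS
  have hdec : ∀ (ν : Measure (𝓧 × F)),
      ν S = ∑' c : F, ν (((fun x => (x, c)) ⁻¹' S) ×ˢ ({c} : Set F)) := by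
    intro ν
    have hU : S = ⋃ c : F, ((fun x => (x, c)) ⁻¹' S) ×ˢ ({c} : Set F) := by
      ext ⟨x, c⟩
      constructor
      · intro hx
        exact Set.mem_iUnion.mpr ⟨c, hx, rfl⟩
      · intro hx
        obtain ⟨d, hd, hdc⟩ := Set.mem_iUnion.mp hx
        rw [Set.mem_singleton_iff] at hdc
        subst hdc
        exact hd
    conv_lhs => rw [hU]
    rw [measure_iUnion]
    · intro c c' hcc'
      simp only [Function.onFun, Set.disjoint_left]
      rintro ⟨x, d⟩ ⟨_, hd⟩ ⟨_, hd'⟩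
      rw [Set.mem_singleton_iff] at hd hd'
      exact hcc' (hd ▸ hd' ▸ rfl)
    · intro c
      exact (measurable_prodMk_right hS).prod (measurableSet_singleton c)
  rw [hdec ν₁, hdec ν₂]
  exact tsum_congr fun c => h _ (measurable_prodMk_right hS) c

/-- second item of Proposition 2: the SoftNCE loss, built from the
class-conditional mean embeddings `f̄(c) = E[f(X) | C = c]`, bounds mutual information as
`I(X;C) ≥ log N − I_NCE^{soft}`. -/
theorem stmt_5 {Ω 𝓧 : Type*} [MeasurableSpace Ω] [MeasurableSpace 𝓧]
    {M dz : ℕ} (μ : Measure Ω) [IsProbabilityMeasure μ]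
    (X : Ω → 𝓧) (C : Ω → Fin M) (hX : Measurable X) (hC : Measurable C)
    (hpos : ∀ c : Fin M, 0 < μ (C ⁻¹' {c}))
    (N : ℕ) (hN : 1 ≤ N)
    (f : 𝓧 → EuclideanSpace ℝ (Fin dz)) (hf : Measurable f)
    (hfbdd : ∃ R : ℝ, ∀ x, ‖f x‖ ≤ R)
    (ψ : EuclideanSpace ℝ (Fin dz) → EuclideanSpace ℝ (Fin dz) → ℝ)
    (hψ : Measurable (fun p : EuclideanSpace ℝ (Fin dz) × EuclideanSpace ℝ (Fin dz) =>
      ψ p.1 p.2))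
    (fbar : Fin M → EuclideanSpace ℝ (Fin dz))
    (hfbar : ∀ c, fbar c = ∫ x, f x ∂(condLaw μ X C c))
    (hintP : ∀ i : Fin N, Integrable (fun p : 𝓧 × (Fin N → Fin M) =>
      -Real.log (Real.exp (ψ (f p.1) (fbar (p.2 i))) /
        ∑ j : Fin N, Real.exp (ψ (f p.1) (fbar (p.2 j))))) (Pmeas μ X C N i)) :
    ((Real.log N
        - (1 / N) * ∑ i : Fin N, ∫ p, -Real.log (Real.exp (ψ (f p.1) (fbar (p.2 i))) /
            ∑ j : Fin N, Real.exp (ψ (f p.1) (fbar (p.2 j)))) ∂(Pmeas μ X C N i) : ℝ) : EReal)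
      ≤ mutualInfo μ X C := by
  -- notation
  set π : Measure (𝓧 × Fin M) := μ.map (fun ω => (X ω, C ω)) with hπ_def
  set ρ : Measure (𝓧 × Fin M) := (μ.map X).prod (μ.map C) with hρ_def
  set L : 𝓧 × Fin M → ℝ := fun q => Real.log ((π.rnDeriv ρ q).toReal) with hL_def
  rw [mutualInfo, klDivergence]
  by_cases hcond : π ≪ ρ ∧ Integrable L π
  swap
  · rw [if_neg hcond]; exact le_top
  rw [if_pos hcond]
  rw [EReal.coe_le_coe_iff]
  obtain ⟨hac, hLint⟩ := hcond
  -- basic instances and measurability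
  haveI hlawX : IsProbabilityMeasure (μ.map X) := Measure.isProbabilityMeasure_map hX.aemeasurable
  haveI hlawC : IsProbabilityMeasure (μ.map C) := Measure.isProbabilityMeasure_map hC.aemeasurable
  haveI hπprob : IsProbabilityMeasure π := Measure.isProbabilityMeasure_map (hX.prodMk hC).aemeasurable
  haveI hρprob : IsProbabilityMeasure ρ := by infer_instance
  have hcondprob : ∀ c : Fin M, IsProbabilityMeasure (condLaw μ X C c) := by
    intro c
    haveI : IsProbabilityMeasure (μ[|C ⁻¹' {c}]) :=
      cond_isProbabilityMeasure (hpos c).ne'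
    exact Measure.isProbabilityMeasure_map hX.aemeasurable
  have hκ : ∀ i : Fin N, Measurable
      (fun cs : Fin N → Fin M => (condLaw μ X C (cs i)).map (fun x => (x, cs))) :=
    fun i => measurable_of_countable _
  set m : Measure (Fin N → Fin M) := Measure.pi (fun _ : Fin N => μ.map C) with hm_def
  haveI hmprob : IsProbabilityMeasure m := by rw [hm_def]; infer_instance
  set r : 𝓧 × Fin M → ℝ≥0∞ := π.rnDeriv ρ with hr_def
  have hrmeas : Measurable r := Measure.measurable_rnDeriv π ρ
  have hLmeas : Measurable L := hrmeas.ennreal_toReal.log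
  -- the scores
  set S : Fin N → 𝓧 × (Fin N → Fin M) → ℝ := fun i p =>
    Real.exp (ψ (f p.1) (fbar (p.2 i))) /
      ∑ j : Fin N, Real.exp (ψ (f p.1) (fbar (p.2 j))) with hS_def
  have hNpos : (0 : ℝ) < N := by exact_mod_cast hN
  have hSpos : ∀ i p, 0 < S i p := by
    intro i p
    apply div_pos (Real.exp_pos _)
    exact Finset.sum_pos (fun j _ => Real.exp_pos _) ⟨i, Finset.mem_univ i⟩
  have hSsum : ∀ p, ∑ i : Fin N, S i p = 1 := by
    intro p
    rw [hS_def]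
    rw [← Finset.sum_div]
    apply div_self
    exact (Finset.sum_pos (fun j _ => Real.exp_pos _)
      ⟨⟨0, hN⟩, Finset.mem_univ _⟩).ne'
  have hSmeas : ∀ i, Measurable (S i) := by
    intro i
    apply Measurable.div
    · apply Real.measurable_exp.comp
      exact hψ.comp ((hf.comp measurable_fst).prodMk
        ((measurable_of_countable fbar).comp ((measurable_pi_apply i).comp measurable_snd)))
    · apply Finset.measurable_sum
      intro j _
      apply Real.measurable_exp.comp
      exact hψ.comp ((hf.comp measurable_fst).prodMk
        ((measurable_of_countable fbar).comp ((measurable_pi_apply j).comp measurable_snd)))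
  -- probability of Pmeas
  have hPprob : ∀ i : Fin N, IsProbabilityMeasure (Pmeas μ X C N i) := by
    intro i
    constructor
    rw [Pmeas, Measure.bind_apply MeasurableSet.univ (hκ i).aemeasurable]
    have hone : ∀ cs : Fin N → Fin M,
        ((condLaw μ X C (cs i)).map (fun x => (x, cs))) Set.univ = 1 := by
      intro cs
      haveI := hcondprob (cs i)
      haveI : IsProbabilityMeasure ((condLaw μ X C (cs i)).map (fun x => (x, cs))) :=
        Measure.isProbabilityMeasure_map measurable_prodMk_right.aemeasurable
      exact measure_univ
    simp only [hone]
    simp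
  -- rectangle formula for Pmeas
  have hPrect : ∀ (i : Fin N) (A : Set 𝓧), MeasurableSet A → ∀ cs₀ : Fin N → Fin M,
      Pmeas μ X C N i (A ×ˢ ({cs₀} : Set (Fin N → Fin M)))
        = m {cs₀} * condLaw μ X C (cs₀ i) A := by
    intro i A hA cs₀
    have hAc : MeasurableSet (A ×ˢ ({cs₀} : Set (Fin N → Fin M))) :=
      hA.prod (measurableSet_singleton _)
    rw [Pmeas, Measure.bind_apply hAc (hκ i).aemeasurable]
    have hval : ∀ cs : Fin N → Fin M,
        ((condLaw μ X C (cs i)).map (fun x => (x, cs))) (A ×ˢ ({cs₀} : Set (Fin N → Fin M)))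
          = Set.indicator {cs₀} (fun _ => condLaw μ X C (cs₀ i) A) cs := by
      intro cs
      rw [Measure.map_apply measurable_prodMk_right hAc]
      by_cases h : cs = cs₀
      · subst h
        have : (fun x => (x, cs)) ⁻¹' (A ×ˢ ({cs} : Set (Fin N → Fin M))) = A := by
          ext x; simp
        rw [this, Set.indicator_of_mem (Set.mem_singleton cs)]
      · have : (fun x => (x, cs)) ⁻¹' (A ×ˢ ({cs₀} : Set (Fin N → Fin M))) = ∅ := by
          ext x
          simp only [Set.mem_preimage, Set.mem_prod, Set.mem_singleton_iff,
            Set.mem_empty_iff_false, iff_false, not_and]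
          exact fun _ => h
        rw [this, Set.indicator_of_notMem (by simpa using h)]
        simp
    rw [lintegral_congr hval, lintegral_indicator (measurableSet_singleton _) _,
      setLIntegral_const, mul_comm]
  -- rectangle formula for π
  have hπrect : ∀ (c : Fin M) (A : Set 𝓧), MeasurableSet A →
      π (A ×ˢ ({c} : Set (Fin M))) = μ (C ⁻¹' {c}) * condLaw μ X C c A := by
    intro c A hA
    have hpc0 : μ (C ⁻¹' {c}) ≠ 0 := (hpos c).ne'
    have hpcT : μ (C ⁻¹' {c}) ≠ ∞ := measure_ne_top μ _
    have hAc : MeasurableSet (A ×ˢ ({c} : Set (Fin M))) := hA.prod (measurableSet_singleton c)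
    rw [hπ_def, Measure.map_apply (hX.prodMk hC) hAc]
    rw [condLaw, Measure.map_apply hX hA,
      cond_apply (hC (measurableSet_singleton c))]
    rw [← mul_assoc, ENNReal.mul_inv_cancel hpc0 hpcT, one_mul]
    congr 1
    ext ω
    simp only [Set.mem_preimage, Set.mem_prod, Set.mem_singleton_iff, Set.mem_inter_iff]
    exact and_comm
  -- key: conditional law has density r(·,c) wrt law of X
  have hkey : ∀ (c : Fin M) (A : Set 𝓧), MeasurableSet A →
      condLaw μ X C c A = ∫⁻ x in A, r (x, c) ∂(μ.map X) := by
    intro c A hA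
    have hpc0 : μ (C ⁻¹' {c}) ≠ 0 := (hpos c).ne'
    have hpcT : μ (C ⁻¹' {c}) ≠ ∞ := measure_ne_top μ _
    have hAc : MeasurableSet (A ×ˢ ({c} : Set (Fin M))) := hA.prod (measurableSet_singleton c)
    have h2 : π (A ×ˢ ({c} : Set (Fin M)))
        = μ (C ⁻¹' {c}) * ∫⁻ x in A, r (x, c) ∂(μ.map X) := by
      conv_lhs => rw [← Measure.withDensity_rnDeriv_eq π ρ hac]
      rw [withDensity_apply _ hAc]
      rw [hρ_def, ← Measure.prod_restrict]
      rw [lintegral_prod _ hrmeas.aemeasurable]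
      have hinner : ∀ x : 𝓧, ∫⁻ y, r (x, y) ∂((μ.map C).restrict {c})
          = r (x, c) * μ (C ⁻¹' {c}) := by
        intro x
        rw [lintegral_singleton (fun y => r (x, y)) c,
          Measure.map_apply hC (measurableSet_singleton c)]
      simp only [hinner]
      have hrc : Measurable fun x : 𝓧 => r (x, c) := hrmeas.comp measurable_prodMk_right
      rw [lintegral_mul_const _ hrc, mul_comm]
    exact (ENNReal.mul_right_inj hpc0 hpcT).mp ((hπrect c A hA).symm.trans h2)
  -- Pmeas i = Qmeas.withDensity (r ∘ T i)
  set T : Fin N → (𝓧 × (Fin N → Fin M)) → 𝓧 × Fin M := fun i p => (p.1, p.2 i) with hT_def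
  have hTmeas : ∀ i, Measurable (T i) :=
    fun i => measurable_fst.prodMk ((measurable_pi_apply i).comp measurable_snd)
  have hwd : ∀ i : Fin N,
      Pmeas μ X C N i = (Qmeas μ X C N).withDensity (fun p => r (T i p)) := by
    intro i
    have hrT : Measurable fun p : 𝓧 × (Fin N → Fin M) => r (T i p) :=
      hrmeas.comp (hTmeas i)
    apply measure_ext_prod_singleton
    intro A hA cs₀
    have hAc : MeasurableSet (A ×ˢ ({cs₀} : Set (Fin N → Fin M))) :=
      hA.prod (measurableSet_singleton _)
    rw [hPrect i A hA cs₀, withDensity_apply _ hAc]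
    rw [Qmeas, ← Measure.prod_restrict]
    rw [lintegral_prod _ hrT.aemeasurable]
    have hinner : ∀ x : 𝓧, ∫⁻ cs, r (T i (x, cs)) ∂(m.restrict {cs₀})
        = r (x, cs₀ i) * m {cs₀} := by
      intro x
      exact lintegral_singleton (fun cs => r (T i (x, cs))) cs₀
    simp only [← hm_def, hinner]
    have hrc : Measurable fun x : 𝓧 => r (x, cs₀ i) := hrmeas.comp measurable_prodMk_right
    rw [lintegral_mul_const _ hrc, ← hkey (cs₀ i) A hA, mul_comm]
  -- Pmeas i pushed forward by T i is π
  have hmap : ∀ i : Fin N, (Pmeas μ X C N i).map (T i) = π := by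
    intro i
    apply measure_ext_prod_singleton
    intro A hA c
    have hAc : MeasurableSet (A ×ˢ ({c} : Set (Fin M))) := hA.prod (measurableSet_singleton c)
    rw [Measure.map_apply (hTmeas i) hAc]
    have hE : MeasurableSet ((fun cs : Fin N → Fin M => cs i) ⁻¹' ({c} : Set (Fin M))) :=
      (Set.to_countable ((fun cs : Fin N → Fin M => cs i) ⁻¹' ({c} : Set (Fin M)))).measurableSet
    have hpre : T i ⁻¹' (A ×ˢ ({c} : Set (Fin M)))
        = A ×ˢ ((fun cs : Fin N → Fin M => cs i) ⁻¹' ({c} : Set (Fin M))) := by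
      ext ⟨x, cs⟩
      simp only [hT_def, Set.mem_preimage, Set.mem_prod, Set.mem_singleton_iff]
    rw [hpre, Pmeas, Measure.bind_apply (hA.prod hE) (hκ i).aemeasurable]
    have hval : ∀ cs : Fin N → Fin M,
        ((condLaw μ X C (cs i)).map (fun x => (x, cs)))
            (A ×ˢ ((fun cs : Fin N → Fin M => cs i) ⁻¹' ({c} : Set (Fin M))))
          = Set.indicator ((fun cs : Fin N → Fin M => cs i) ⁻¹' ({c} : Set (Fin M)))
              (fun _ => condLaw μ X C c A) cs := by
      intro cs
      rw [Measure.map_apply measurable_prodMk_right (hA.prod hE)]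
      by_cases h : cs i = c
      · have : (fun x => (x, cs)) ⁻¹' (A ×ˢ ((fun cs : Fin N → Fin M => cs i) ⁻¹' ({c} : Set (Fin M)))) = A := by
          ext x
          simp [Function.eval, h]
        rw [this, Set.indicator_of_mem (by simpa [Function.eval] using h), h]
      · have : (fun x => (x, cs)) ⁻¹' (A ×ˢ ((fun cs : Fin N → Fin M => cs i) ⁻¹' ({c} : Set (Fin M)))) = ∅ := by
          ext x
          simp only [Set.mem_preimage, Set.mem_prod, Set.mem_singleton_iff,
            Set.mem_empty_iff_false, iff_false, not_and, Function.eval]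
          exact fun _ => h
        rw [this, Set.indicator_of_notMem (by simpa [Function.eval] using h)]
        simp
    rw [lintegral_congr hval, lintegral_indicator hE _, setLIntegral_const]
    have hmE : m ((fun cs : Fin N → Fin M => cs i) ⁻¹' ({c} : Set (Fin M))) = μ (C ⁻¹' {c}) := by
      have hset : (fun cs : Fin N → Fin M => cs i) ⁻¹' ({c} : Set (Fin M))
          = Set.pi Set.univ (fun j => if j = i then {c} else Set.univ) := by
        ext cs
        simp only [Set.mem_preimage, Set.mem_singleton_iff, Set.mem_pi, Set.mem_univ,
          true_implies, Function.eval]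
        constructor
        · intro h j
          by_cases hj : j = i
          · subst hj; simp [h]
          · simp [hj]
        · intro h
          have := h i
          simpa using this
      rw [hset, hm_def, Measure.pi_pi]
      rw [Finset.prod_eq_single i (fun j _ hj => by simp [hj]) (by simp)]
      simp [Measure.map_apply hC (measurableSet_singleton c)]
    rw [hmE, hπrect c A hA, mul_comm]
  -- a.e. finiteness of r on Q
  have haefin : ∀ᵐ p ∂(Qmeas μ X C N), ∀ c : Fin M, r (p.1, c) ≠ ∞ := by
    have hρae : ∀ᵐ q ∂ρ, r q ≠ ∞ := by
      filter_upwards [Measure.rnDeriv_lt_top π ρ] with q hq using hq.ne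
    have hρnull : ρ {q : 𝓧 × Fin M | r q = ∞} = 0 := by
      have := ae_iff.mp hρae
      simpa [not_not] using this
    have hXae : ∀ᵐ x ∂(μ.map X), ∀ c : Fin M, r (x, c) ≠ ∞ := by
      have hsm : MeasurableSet {q : 𝓧 × Fin M | r q = ∞} :=
        hrmeas (measurableSet_singleton ∞)
      have h0' := (Measure.measure_prod_null (μ := μ.map X) (ν := μ.map C) hsm).mp
        (by rw [← hρ_def]; exact hρnull)
      have h0 : ∀ᵐ x ∂(μ.map X), (μ.map C) (Prod.mk x ⁻¹' {q : 𝓧 × Fin M | r q = ∞}) = 0 := h0'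
      filter_upwards [h0] with x hx c
      intro hc
      have hcmem : c ∈ Prod.mk x ⁻¹' {q : 𝓧 × Fin M | r q = ∞} := hc
      have : (μ.map C) {c} ≤ (μ.map C) (Prod.mk x ⁻¹' {q : 𝓧 × Fin M | r q = ∞}) :=
        measure_mono (Set.singleton_subset_iff.mpr hcmem)
      rw [hx] at this
      have hpc : (μ.map C) {c} = μ (C ⁻¹' {c}) := Measure.map_apply hC (measurableSet_singleton c)
      rw [hpc] at this
      exact absurd (le_antisymm this zero_le) (hpos c).ne'
    -- transfer along the first coordinate
    have hbad : MeasurableSet {x : 𝓧 | ¬ ∀ c : Fin M, r (x, c) ≠ ∞} := by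
      have : {x : 𝓧 | ¬ ∀ c : Fin M, r (x, c) ≠ ∞} = ⋃ c : Fin M, {x | r (x, c) = ∞} := by
        ext x; simp
      rw [this]
      exact MeasurableSet.iUnion fun c =>
        (hrmeas.comp measurable_prodMk_right) (measurableSet_singleton ∞)
    have hbad0 : (μ.map X) {x : 𝓧 | ¬ ∀ c : Fin M, r (x, c) ≠ ∞} = 0 := ae_iff.mp hXae
    have hQ0 : (Qmeas μ X C N) ({x : 𝓧 | ¬ ∀ c : Fin M, r (x, c) ≠ ∞}
        ×ˢ (Set.univ : Set (Fin N → Fin M))) = 0 := by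
      rw [Qmeas, Measure.prod_prod, hbad0, zero_mul]
    rw [ae_iff]
    apply measure_mono_null _ hQ0
    intro p hp
    exact ⟨hp, Set.mem_univ _⟩
  -- shared: pointwise bound and lintegral comparison
  have hle1 : ∀ i p, S i p ≤ 1 := by
    intro i p
    rw [← hSsum p]
    exact Finset.single_le_sum (fun j _ => (hSpos j p).le) (Finset.mem_univ i)
  have hhmeas : ∀ i : Fin N, Measurable fun p : 𝓧 × (Fin N → Fin M) =>
      Real.log ((N : ℝ) * S i p) - L (T i p) :=
    fun i => (((hSmeas i).const_mul (N:ℝ)).log).sub (hLmeas.comp (hTmeas i))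
  have hpt : ∀ i : Fin N, ∀ᵐ p ∂(Qmeas μ X C N),
      r (T i p) * ENNReal.ofReal (Real.exp (Real.log ((N : ℝ) * S i p) - L (T i p)))
        ≤ ENNReal.ofReal ((N : ℝ) * S i p) := by
    intro i
    filter_upwards [haefin] with p hp
    have hfin : r (T i p) ≠ ∞ := hp (p.2 i)
    by_cases h0 : r (T i p) = 0
    · rw [h0, zero_mul]; exact zero_le
    · have htpos : 0 < (r (T i p)).toReal := ENNReal.toReal_pos h0 hfin
      have hLval : L (T i p) = Real.log ((r (T i p)).toReal) := rfl
      have hexp : Real.exp (Real.log ((N : ℝ) * S i p) - L (T i p))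
          = ((N : ℝ) * S i p) / (r (T i p)).toReal := by
        rw [Real.exp_sub, Real.exp_log (mul_pos hNpos (hSpos i p)), hLval,
          Real.exp_log htpos]
      rw [hexp]
      have hrt : r (T i p) = ENNReal.ofReal ((r (T i p)).toReal) :=
        (ENNReal.ofReal_toReal hfin).symm
      nth_rewrite 1 [hrt]
      rw [← ENNReal.ofReal_mul htpos.le]
      apply le_of_eq
      congr 1
      rw [mul_comm, div_mul_cancel₀ _ htpos.ne']
  have hliQ : ∀ i : Fin N,
      (∫⁻ p, ENNReal.ofReal (Real.exp (Real.log ((N : ℝ) * S i p) - L (T i p)))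
        ∂(Pmeas μ X C N i))
      ≤ ∫⁻ p, ENNReal.ofReal ((N : ℝ) * S i p) ∂(Qmeas μ X C N) := by
    intro i
    have hrT : Measurable fun p : 𝓧 × (Fin N → Fin M) => r (T i p) :=
      hrmeas.comp (hTmeas i)
    have hg : Measurable fun p : 𝓧 × (Fin N → Fin M) =>
        ENNReal.ofReal (Real.exp (Real.log ((N : ℝ) * S i p) - L (T i p))) :=
      ((hhmeas i).exp).ennreal_ofReal
    rw [hwd i, lintegral_withDensity_eq_lintegral_mul _ hrT hg]
    refine lintegral_mono_ae ((hpt i).mono fun p hp => ?_)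
    simpa [Pi.mul_apply] using hp
  have hQNS : ∀ i : Fin N, (∫⁻ p, ENNReal.ofReal ((N : ℝ) * S i p) ∂(Qmeas μ X C N))
      ≤ ENNReal.ofReal (N : ℝ) := by
    intro i
    calc ∫⁻ p, ENNReal.ofReal ((N : ℝ) * S i p) ∂(Qmeas μ X C N)
        ≤ ∫⁻ _, ENNReal.ofReal (N : ℝ) ∂(Qmeas μ X C N) := by
          apply lintegral_mono
          intro p
          apply ENNReal.ofReal_le_ofReal
          calc (N : ℝ) * S i p ≤ (N : ℝ) * 1 :=
                mul_le_mul_of_nonneg_left (hle1 i p) hNpos.le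
            _ = (N : ℝ) := mul_one _
      _ = ENNReal.ofReal (N : ℝ) := by
          haveI : IsProbabilityMeasure (Qmeas μ X C N) := by
            rw [Qmeas]; infer_instance
          rw [lintegral_const, measure_univ, mul_one]
  have hlifin : ∀ i : Fin N,
      (∫⁻ p, ENNReal.ofReal (Real.exp (Real.log ((N : ℝ) * S i p) - L (T i p)))
        ∂(Pmeas μ X C N i)) ≠ ∞ :=
    fun i => (lt_of_le_of_lt ((hliQ i).trans (hQNS i)) ENNReal.ofReal_lt_top).ne
  -- main per-i inequality
  have hmain : ∀ i : Fin N,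
      Real.log N - ∫ p, -Real.log (S i p) ∂(Pmeas μ X C N i)
        ≤ (∫ q, L q ∂π)
          + ((∫⁻ p, ENNReal.ofReal (Real.exp (Real.log (N * S i p) - L (T i p)))
              ∂(Pmeas μ X C N i)).toReal - 1) := by
    intro i
    haveI := hPprob i
    have hℓint : Integrable (fun p : 𝓧 × (Fin N → Fin M) => -Real.log (S i p))
        (Pmeas μ X C N i) := hintP i
    have hLT_int : Integrable (fun p => L (T i p)) (Pmeas μ X C N i) := by
      have h1 : Integrable L ((Pmeas μ X C N i).map (T i)) := by rw [hmap i]; exact hLint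
      exact (integrable_map_measure hLmeas.aestronglyMeasurable (hTmeas i).aemeasurable).mp h1
    have hLT_eq : ∫ p, L (T i p) ∂(Pmeas μ X C N i) = ∫ q, L q ∂π := by
      rw [← hmap i, integral_map (hTmeas i).aemeasurable hLmeas.aestronglyMeasurable]
    have hg_eq : (fun p : 𝓧 × (Fin N → Fin M) => Real.log ((N : ℝ) * S i p))
        = fun p => Real.log (N : ℝ) + -(-Real.log (S i p)) := by
      funext p
      rw [Real.log_mul hNpos.ne' (hSpos i p).ne', neg_neg]
    have hg_int : Integrable (fun p : 𝓧 × (Fin N → Fin M) => Real.log ((N : ℝ) * S i p))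
        (Pmeas μ X C N i) := by
      rw [hg_eq]; exact (integrable_const _).add hℓint.neg
    have hg_val : ∫ p, Real.log ((N : ℝ) * S i p) ∂(Pmeas μ X C N i)
        = Real.log (N : ℝ) - ∫ p, -Real.log (S i p) ∂(Pmeas μ X C N i) := by
      have hg2 : Integrable (fun p : 𝓧 × (Fin N → Fin M) => -(-Real.log (S i p)))
          (Pmeas μ X C N i) := hℓint.neg
      rw [hg_eq, integral_add (integrable_const _) hg2, integral_const,
        integral_neg, probReal_univ]
      simp [sub_eq_add_neg]
    have hexpmeas : Measurable fun p : 𝓧 × (Fin N → Fin M) =>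
        Real.exp (Real.log ((N : ℝ) * S i p) - L (T i p)) :=
      Real.measurable_exp.comp (hhmeas i)
    have hexp_int : Integrable (fun p : 𝓧 × (Fin N → Fin M) =>
        Real.exp (Real.log ((N : ℝ) * S i p) - L (T i p))) (Pmeas μ X C N i) := by
      refine ⟨hexpmeas.aestronglyMeasurable, ?_⟩
      rw [hasFiniteIntegral_iff_ofReal (ae_of_all _ fun p => (Real.exp_pos _).le)]
      exact lt_of_le_of_lt ((hliQ i).trans (hQNS i)) ENNReal.ofReal_lt_top
    have ha_eq : ∫ p, Real.exp (Real.log ((N : ℝ) * S i p) - L (T i p)) ∂(Pmeas μ X C N i)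
        = (∫⁻ p, ENNReal.ofReal (Real.exp (Real.log ((N : ℝ) * S i p) - L (T i p)))
            ∂(Pmeas μ X C N i)).toReal := by
      rw [integral_eq_lintegral_of_nonneg_ae (ae_of_all _ fun p => (Real.exp_pos _).le)
        hexpmeas.aestronglyMeasurable]
    have hint_h : Integrable (fun p : 𝓧 × (Fin N → Fin M) =>
        Real.log ((N : ℝ) * S i p) - L (T i p)) (Pmeas μ X C N i) := hg_int.sub hLT_int
    have hcomp : ∫ p, (Real.log ((N : ℝ) * S i p) - L (T i p)) ∂(Pmeas μ X C N i)
        ≤ (∫⁻ p, ENNReal.ofReal (Real.exp (Real.log ((N : ℝ) * S i p) - L (T i p)))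
            ∂(Pmeas μ X C N i)).toReal - 1 := by
      calc ∫ p, (Real.log ((N : ℝ) * S i p) - L (T i p)) ∂(Pmeas μ X C N i)
          ≤ ∫ p, (Real.exp (Real.log ((N : ℝ) * S i p) - L (T i p)) - 1)
              ∂(Pmeas μ X C N i) := by
            apply integral_mono hint_h (hexp_int.sub (integrable_const 1))
            intro p
            simp only [Pi.sub_apply]
            have := Real.add_one_le_exp (Real.log ((N : ℝ) * S i p) - L (T i p))
            linarith
        _ = (∫⁻ p, ENNReal.ofReal (Real.exp (Real.log ((N : ℝ) * S i p) - L (T i p)))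
              ∂(Pmeas μ X C N i)).toReal - 1 := by
            rw [integral_sub hexp_int (integrable_const 1), ha_eq, integral_const,
              probReal_univ]
            norm_num
    have hsplit : ∫ p, (Real.log ((N : ℝ) * S i p) - L (T i p)) ∂(Pmeas μ X C N i)
        = (Real.log (N : ℝ) - ∫ p, -Real.log (S i p) ∂(Pmeas μ X C N i)) - ∫ q, L q ∂π := by
      rw [integral_sub hg_int hLT_int, hg_val, hLT_eq]
    rw [hsplit] at hcomp
    linarith
  -- sum of the lintegrals is at most N
  have hsum : ∑ i : Fin N, (∫⁻ p, ENNReal.ofReal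
        (Real.exp (Real.log (N * S i p) - L (T i p))) ∂(Pmeas μ X C N i)).toReal
      ≤ (N : ℝ) := by
    have hQsum : ∑ i : Fin N, ∫⁻ p, ENNReal.ofReal ((N : ℝ) * S i p) ∂(Qmeas μ X C N)
        = ENNReal.ofReal (N : ℝ) := by
      have hms : ∀ i ∈ (Finset.univ : Finset (Fin N)), Measurable
          fun p : 𝓧 × (Fin N → Fin M) => ENNReal.ofReal ((N : ℝ) * S i p) :=
        fun i _ => ((hSmeas i).const_mul (N:ℝ)).ennreal_ofReal
      rw [← lintegral_finset_sum _ hms]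
      have hptsum : ∀ p : 𝓧 × (Fin N → Fin M),
          ∑ i : Fin N, ENNReal.ofReal ((N : ℝ) * S i p) = ENNReal.ofReal (N : ℝ) := by
        intro p
        rw [← ENNReal.ofReal_sum_of_nonneg (fun i _ => by positivity)]
        congr 1
        rw [← Finset.mul_sum, hSsum p, mul_one]
      simp only [hptsum]
      haveI : IsProbabilityMeasure (Qmeas μ X C N) := by rw [Qmeas]; infer_instance
      rw [lintegral_const, measure_univ, mul_one]
    calc ∑ i : Fin N, (∫⁻ p, ENNReal.ofReal
          (Real.exp (Real.log ((N : ℝ) * S i p) - L (T i p))) ∂(Pmeas μ X C N i)).toReal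
        = (∑ i : Fin N, ∫⁻ p, ENNReal.ofReal
            (Real.exp (Real.log ((N : ℝ) * S i p) - L (T i p))) ∂(Pmeas μ X C N i)).toReal :=
          (ENNReal.toReal_sum (fun i _ => hlifin i)).symm
      _ ≤ (N : ℝ) := by
          apply ENNReal.toReal_le_of_le_ofReal hNpos.le
          calc ∑ i : Fin N, ∫⁻ p, ENNReal.ofReal
                (Real.exp (Real.log ((N : ℝ) * S i p) - L (T i p))) ∂(Pmeas μ X C N i)
              ≤ ∑ i : Fin N, ∫⁻ p, ENNReal.ofReal ((N : ℝ) * S i p) ∂(Qmeas μ X C N) :=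
                Finset.sum_le_sum fun i _ => hliQ i
            _ = ENNReal.ofReal (N : ℝ) := hQsum
  -- conclude
  set KL : ℝ := ∫ q, L q ∂π with hKL_def
  set a : Fin N → ℝ := fun i => (∫⁻ p, ENNReal.ofReal
      (Real.exp (Real.log ((N : ℝ) * S i p) - L (T i p))) ∂(Pmeas μ X C N i)).toReal
    with ha_def
  set I : Fin N → ℝ := fun i => ∫ p, -Real.log (S i p) ∂(Pmeas μ X C N i) with hI_def
  have hsum2 : ∑ i : Fin N, (Real.log (N : ℝ) - I i)
      ≤ ∑ i : Fin N, (KL + (a i - 1)) := Finset.sum_le_sum fun i _ => hmain i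
  have hcard : (Finset.univ : Finset (Fin N)).card = N := by simp
  have hL1 : ∑ i : Fin N, (Real.log (N : ℝ) - I i)
      = (N : ℝ) * Real.log (N : ℝ) - ∑ i : Fin N, I i := by
    rw [Finset.sum_sub_distrib, Finset.sum_const, hcard, nsmul_eq_mul]
  have hR1 : ∑ i : Fin N, (KL + (a i - 1))
      = (N : ℝ) * KL + (∑ i : Fin N, a i) - (N : ℝ) := by
    rw [Finset.sum_add_distrib, Finset.sum_sub_distrib, Finset.sum_const, Finset.sum_const,
      hcard, nsmul_eq_mul, nsmul_eq_mul, mul_one]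
    ring
  have hmul : (N : ℝ) * Real.log (N : ℝ) - ∑ i : Fin N, I i ≤ (N : ℝ) * KL := by
    have hA : ∑ i : Fin N, a i ≤ (N : ℝ) := hsum
    rw [hL1] at hsum2
    rw [hR1] at hsum2
    linarith
  have hdiv : Real.log (N : ℝ) - (1 / (N : ℝ)) * ∑ i : Fin N, I i ≤ KL := by
    have h1 : (1 / (N : ℝ)) * ((N : ℝ) * Real.log (N : ℝ) - ∑ i : Fin N, I i)
        ≤ (1 / (N : ℝ)) * ((N : ℝ) * KL) := by
      apply mul_le_mul_of_nonneg_left hmul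
      positivity
    have h2 : (1 / (N : ℝ)) * ((N : ℝ) * Real.log (N : ℝ) - ∑ i : Fin N, I i)
        = Real.log (N : ℝ) - (1 / (N : ℝ)) * ∑ i : Fin N, I i := by
      field_simp
    have h3 : (1 / (N : ℝ)) * ((N : ℝ) * KL) = KL := by
      field_simp
    rw [h2, h3] at h1
    exact h1
  exact hdiv
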